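/- Let N ≥ 2 and η_α = exp(2πiα/N) for α = 1,…,N-1. Then ∑_{α=1}^{N-1} 1/(η_α - 1)² = -(N-1)(N-5)/12. -/

import Mathlib

open Finset Complex

noncomputable def η (N α : ℕ) : ℂ := Complex.exp (2 * Real.pi * Complex.I * α / N)

lemma eta_pow (N α : ℕ) : η N α = η N 1 ^ α := by
  rw [η, η, ← Complex.exp_nat_mul]
  congr 1
  push_cast
  ring

lemma eta_pow_eq_one_iff (N : ℕ) (hN : 2 ≤ N) (m : ℕ) :
    η N 1 ^ m = 1 ↔ N ∣ m := by
  have hN0 : (N:ℂ) ≠ 0 := Nat.cast_ne_zero.mpr (by omega)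
  have h2 : (2 * (Real.pi:ℂ) * Complex.I : ℂ) ≠ 0 := by
    simp [Real.pi_ne_zero, Complex.I_ne_zero]
  rw [← eta_pow, η, Complex.exp_eq_one_iff]
  constructor
  · rintro ⟨n, hn⟩
    have hmn : (m:ℂ) = n * N := by
      field_simp at hn
      have h3 : (2 * (Real.pi:ℂ) * Complex.I) * m = (2 * (Real.pi:ℂ) * Complex.I) * (n * N) := by
        linear_combination (2 * (Real.pi:ℂ) * Complex.I) * hn
      exact mul_left_cancel₀ h2 h3
    have hmz : (m:ℤ) = n * N := by exact_mod_cast hmn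
    have : (N:ℤ) ∣ (m:ℤ) := ⟨n, by linarith⟩
    exact_mod_cast this
  · rintro ⟨c, rfl⟩
    exact ⟨c, by push_cast; field_simp⟩

lemma aux_sum (x : ℂ) (n : ℕ) :
    (x - 1) * ∑ k ∈ range n, (k:ℂ) * x ^ k
      = ((n:ℂ) - 1) * x ^ n + 1 - ∑ k ∈ range n, x ^ k := by
  induction n with
  | zero => simp
  | succ n ih =>
    rw [sum_range_succ, sum_range_succ]
    push_cast
    linear_combination ih

lemma geom_zero (N : ℕ) (x : ℂ) (hx : x ^ N = 1) (h1 : x ≠ 1) :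
    ∑ k ∈ range N, x ^ k = 0 := by
  rw [geom_sum_eq h1, hx]; simp

lemma term_eq (N : ℕ) (hN : 2 ≤ N) (x : ℂ) (hx : x ^ N = 1) (h1 : x ≠ 1) :
    1 / (x - 1) ^ 2 = (∑ k ∈ range N, (k:ℂ) * x ^ k) ^ 2 / (N:ℂ) ^ 2 := by
  have key : (x - 1) * ∑ k ∈ range N, (k:ℂ) * x ^ k = N := by
    rw [aux_sum, geom_zero N x hx h1, hx]; ring
  have hx1 : x - 1 ≠ 0 := sub_ne_zero.mpr h1
  have hN0 : (N:ℂ) ≠ 0 := Nat.cast_ne_zero.mpr (by omega)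
  field_simp
  linear_combination (-1 * ((x - 1) * (∑ k ∈ range N, (k:ℂ) * x ^ k) + (N:ℂ))) * key

lemma sum_pow_root (N : ℕ) (hN : 2 ≤ N) (m : ℕ) :
    ∑ α ∈ Icc 1 (N-1), (η N 1 ^ m) ^ α
      = (if N ∣ m then (N:ℂ) else 0) - 1 := by
  have hrange : range N = insert 0 (Icc 1 (N-1)) := by
    ext a; simp only [Finset.mem_range, Finset.mem_insert, Finset.mem_Icc]; omega
  have hroot : (η N 1 ^ m) ^ N = 1 := by
    rw [← pow_mul, mul_comm, pow_mul, (eta_pow_eq_one_iff N hN N).mpr dvd_rfl, one_pow]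
  have h0 : (0:ℕ) ∉ Icc 1 (N-1) := by simp
  have hsum : ∑ α ∈ range N, (η N 1 ^ m) ^ α = if N ∣ m then (N:ℂ) else 0 := by
    by_cases h : N ∣ m
    · rw [if_pos h, (eta_pow_eq_one_iff N hN m).mpr h]; simp
    · rw [if_neg h]
      exact geom_zero N _ hroot (fun he => h ((eta_pow_eq_one_iff N hN m).mp he))
  rw [hrange, Finset.sum_insert h0, pow_zero] at hsum
  linear_combination hsum

lemma chi_sum (N : ℕ) (hN : 2 ≤ N) (k : ℕ) (hk : k < N) :
    ∑ j ∈ range N, (j:ℂ) * (if N ∣ (k+j) then (N:ℂ) else 0)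
      = (if k = 0 then 0 else ((N:ℂ) - k)) * N := by
  by_cases hk0 : k = 0
  · subst hk0
    rw [if_pos rfl, zero_mul]
    apply Finset.sum_eq_zero
    intro j hj
    simp only [Finset.mem_range] at hj
    by_cases hd : N ∣ (0 + j)
    · have hj0 : j = 0 := by
        obtain ⟨c, hc⟩ := hd
        rcases c with _ | c
        · omega
        · have : N ≤ N * (c+1) := Nat.le_mul_of_pos_right _ (by omega)
          omega
      simp [hj0]
    · rw [if_neg hd, mul_zero]
  · rw [if_neg hk0, Finset.sum_eq_single (N - k)]
    · rw [if_pos ⟨1, by omega⟩]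
      push_cast [Nat.cast_sub (le_of_lt hk)]
      ring
    · intro j hj hjne
      simp only [Finset.mem_range] at hj
      rw [if_neg, mul_zero]
      rintro ⟨c, hc⟩
      rcases c with _ | _ | c
      · omega
      · omega
      · have : N * 2 ≤ N * (c + 1 + 1) := Nat.mul_le_mul_left N (by omega)
        omega
    · intro h
      simp only [Finset.mem_range] at h
      omega

lemma sum_id (n : ℕ) : ∑ k ∈ range n, (k:ℂ) = n*(n-1)/2 := by
  induction n with
  | zero => simp
  | succ n ih => rw [sum_range_succ]; push_cast; linear_combination ih

lemma sum_sq (n : ℕ) : ∑ k ∈ range n, (k:ℂ)^2 = n*(n-1)*(2*n-1)/6 := by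
  induction n with
  | zero => simp
  | succ n ih => rw [sum_range_succ]; push_cast; linear_combination ih

lemma double (N : ℕ) (hN : 2 ≤ N) :
    ∑ α ∈ Icc 1 (N-1), (∑ k ∈ range N, (k:ℂ) * (η N 1 ^ α) ^ k) ^ 2
      = ∑ k ∈ range N, ∑ j ∈ range N,
          (k:ℂ) * (j:ℂ) * ((if N ∣ (k+j) then (N:ℂ) else 0) - 1) := by
  have h1 : ∀ α : ℕ, (∑ k ∈ range N, (k:ℂ) * (η N 1 ^ α) ^ k) ^ 2
      = ∑ k ∈ range N, ∑ j ∈ range N, (k:ℂ) * (j:ℂ) * ((η N 1 ^ (k+j)) ^ α) := by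
    intro α
    rw [sq, Finset.sum_mul_sum]
    refine Finset.sum_congr rfl fun k _ => Finset.sum_congr rfl fun j _ => ?_
    rw [show ((η N 1)^(k+j))^α = ((η N 1)^α)^k * ((η N 1)^α)^j from by
      rw [pow_right_comm, ← pow_add]]
    ring
  calc ∑ α ∈ Icc 1 (N-1), (∑ k ∈ range N, (k:ℂ) * (η N 1 ^ α) ^ k) ^ 2
      = ∑ α ∈ Icc 1 (N-1), ∑ k ∈ range N, ∑ j ∈ range N,
          (k:ℂ) * (j:ℂ) * ((η N 1 ^ (k+j)) ^ α) :=
        Finset.sum_congr rfl fun α _ => h1 α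
    _ = ∑ k ∈ range N, ∑ j ∈ range N,
          (k:ℂ)*(j:ℂ) * ∑ α ∈ Icc 1 (N-1), (η N 1 ^ (k+j)) ^ α := by
        rw [Finset.sum_comm]
        refine Finset.sum_congr rfl fun k _ => ?_
        rw [Finset.sum_comm]
        refine Finset.sum_congr rfl fun j _ => ?_
        rw [Finset.mul_sum]
    _ = _ := by
        refine Finset.sum_congr rfl fun k _ => Finset.sum_congr rfl fun j _ => ?_
        rw [sum_pow_root N hN (k+j)]

theorem stmt_8 (N : ℕ) (hN : 2 ≤ N) :
    ∑ α ∈ Finset.Icc 1 (N - 1), 1 / (η N α - 1) ^ 2 =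
      -((N : ℂ) - 1) * ((N : ℂ) - 5) / 12 := by
  have hN0 : (N:ℂ) ≠ 0 := Nat.cast_ne_zero.mpr (by omega)
  have step1 : ∀ α ∈ Icc 1 (N-1), 1/(η N α - 1)^2
      = (∑ k ∈ range N, (k:ℂ) * (η N 1 ^ α) ^ k) ^ 2 / (N:ℂ)^2 := by
    intro α hα
    simp only [Finset.mem_Icc] at hα
    rw [eta_pow]
    apply term_eq N hN
    · rw [← pow_mul, mul_comm, pow_mul, (eta_pow_eq_one_iff N hN N).mpr dvd_rfl, one_pow]
    · intro he
      have hd := (eta_pow_eq_one_iff N hN α).mp he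
      have := Nat.le_of_dvd (by omega) hd
      omega
  rw [Finset.sum_congr rfl step1, ← Finset.sum_div, double N hN]
  have hsplit : ∑ k ∈ range N, ∑ j ∈ range N,
      (k:ℂ) * (j:ℂ) * ((if N ∣ (k+j) then (N:ℂ) else 0) - 1)
      = ∑ k ∈ range N, ((k:ℂ) * ((if k = 0 then 0 else ((N:ℂ) - k)) * N)
          - (k:ℂ) * ∑ j ∈ range N, (j:ℂ)) := by
    refine Finset.sum_congr rfl fun k hk => ?_
    simp only [Finset.mem_range] at hk
    rw [← chi_sum N hN k hk, Finset.mul_sum, Finset.mul_sum, ← Finset.sum_sub_distrib]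
    refine Finset.sum_congr rfl fun j _ => ?_
    ring
  rw [hsplit]
  have h1 : ∀ k ∈ range N, (k:ℂ) * ((if k = 0 then 0 else ((N:ℂ) - k)) * N)
      - (k:ℂ) * ∑ j ∈ range N, (j:ℂ)
      = ((N:ℂ) * ((k:ℂ)*(N:ℂ) - (k:ℂ)^2) - (k:ℂ) * ∑ j ∈ range N, (j:ℂ)) := by
    intro k _
    by_cases hk0 : k = 0
    · subst hk0; simp
    · rw [if_neg hk0]; ring
  rw [Finset.sum_congr rfl h1, Finset.sum_sub_distrib, ← Finset.mul_sum,
      Finset.sum_sub_distrib, ← Finset.sum_mul, ← Finset.sum_mul, sum_id, sum_sq]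
  field_simp
  ring
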